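/- Let K₁, K₂ ⊆ ℝ² be closed cones with K₁ ∩ K₂ = {0}, and let δ > 0. Then for every α > 2(1 + 2/δ), ∫_{K₁} ( ∫_{K₂} (1+|t−s|)^{−α} ds )^{δ/2} dt < ∞, where both integrals are with respect to Lebesgue measure on ℝ². -/
import Mathlib


open MeasureTheory
open scoped ENNReal

/-- A closed cone in `ℝ²`: a closed set stable under multiplication by nonnegative scalars. -/
def IsClosedCone (K : Set (EuclideanSpace ℝ (Fin 2))) : Prop :=
  IsClosed K ∧ ∀ x ∈ K, ∀ l : ℝ, 0 ≤ l → l • x ∈ K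

/-- Separation for closed cones meeting only at the origin. -/
lemma cone_sep (K₁ K₂ : Set (EuclideanSpace ℝ (Fin 2)))
    (h₁ : IsClosedCone K₁) (h₂ : IsClosedCone K₂) (hK : K₁ ∩ K₂ = {0}) :
    ∃ c : ℝ, 0 < c ∧ c ≤ 1 ∧ ∀ t ∈ K₁, ∀ s ∈ K₂, c * ‖t‖ ≤ ‖t - s‖ := by
  have h0₂ : (0 : EuclideanSpace ℝ (Fin 2)) ∈ K₂ := by
    have : (0 : EuclideanSpace ℝ (Fin 2)) ∈ K₁ ∩ K₂ := by rw [hK]; rfl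
    exact this.2
  set S := K₁ ∩ Metric.sphere (0 : EuclideanSpace ℝ (Fin 2)) 1 with hS
  by_cases hSne : S.Nonempty
  · have hScomp : IsCompact S := (isCompact_sphere _ _).inter_left h₁.1
    have hcont : ContinuousOn (fun t => Metric.infDist t K₂) S :=
      (Metric.continuous_infDist_pt K₂).continuousOn
    obtain ⟨u₀, hu₀S, hu₀min⟩ := hScomp.exists_isMinOn hSne hcont
    set c₀ := Metric.infDist u₀ K₂ with hc₀
    have hc₀pos : 0 < c₀ := by
      rcases lt_or_eq_of_le (Metric.infDist_nonneg (x := u₀) (s := K₂)) with h | h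
      · exact h
      · exfalso
        have hu₀K₂ : u₀ ∈ K₂ := by
          have hcl : u₀ ∈ closure K₂ :=
            (Metric.mem_closure_iff_infDist_zero ⟨0, h0₂⟩).mpr h.symm
          rwa [h₂.1.closure_eq] at hcl
        have : u₀ ∈ K₁ ∩ K₂ := ⟨hu₀S.1, hu₀K₂⟩
        rw [hK] at this
        have hnorm : ‖u₀‖ = 1 := by simpa using hu₀S.2
        simp [Set.mem_singleton_iff] at this
        rw [this] at hnorm; simp at hnorm
    refine ⟨min c₀ 1, lt_min hc₀pos one_pos, min_le_right _ _, ?_⟩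
    intro t ht s hs
    rcases eq_or_ne t 0 with rfl | htne
    · simp
    · have hnt : 0 < ‖t‖ := norm_pos_iff.mpr htne
      set u := (‖t‖⁻¹ : ℝ) • t with hu
      have huS : u ∈ S := by
        constructor
        · exact h₁.2 t ht _ (inv_nonneg.mpr hnt.le)
        · simp [hu, norm_smul, abs_of_nonneg (inv_nonneg.mpr hnt.le),
            inv_mul_cancel₀ hnt.ne']
      have hs' : (‖t‖⁻¹ : ℝ) • s ∈ K₂ := h₂.2 s hs _ (inv_nonneg.mpr hnt.le)
      have h1 : c₀ ≤ Metric.infDist u K₂ := hu₀min huS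
      have h2 : Metric.infDist u K₂ ≤ dist u ((‖t‖⁻¹ : ℝ) • s) :=
        Metric.infDist_le_dist_of_mem hs'
      have h3 : dist u ((‖t‖⁻¹ : ℝ) • s) = ‖t‖⁻¹ * ‖t - s‖ := by
        rw [dist_eq_norm, hu, ← smul_sub, norm_smul,
          Real.norm_eq_abs, abs_of_nonneg (inv_nonneg.mpr hnt.le)]
      have : c₀ * ‖t‖ ≤ ‖t - s‖ := by
        have := (h1.trans h2)
        rw [h3] at this
        calc c₀ * ‖t‖ ≤ (‖t‖⁻¹ * ‖t - s‖) * ‖t‖ := by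
              exact mul_le_mul_of_nonneg_right this hnt.le
          _ = ‖t - s‖ := by field_simp
      calc min c₀ 1 * ‖t‖ ≤ c₀ * ‖t‖ :=
            mul_le_mul_of_nonneg_right (min_le_left _ _) (norm_nonneg _)
        _ ≤ ‖t - s‖ := this
  · -- S empty: K₁ ⊆ {0}
    refine ⟨1, one_pos, le_refl 1, ?_⟩
    intro t ht s hs
    rcases eq_or_ne t 0 with rfl | htne
    · simp
    · exfalso
      apply hSne
      have hnt : 0 < ‖t‖ := norm_pos_iff.mpr htne
      refine ⟨(‖t‖⁻¹ : ℝ) • t, h₁.2 t ht _ (inv_nonneg.mpr hnt.le), ?_⟩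
      simp [norm_smul, abs_of_nonneg (inv_nonneg.mpr hnt.le), inv_mul_cancel₀ hnt.ne']

/-- Let `K₁, K₂ ⊆ ℝ²` be closed cones with `K₁ ∩ K₂ = {0}` and let `δ > 0`.
Then for every `α > 2(1 + 2/δ)`,
`∫_{K₁} (∫_{K₂} (1+|t−s|)^{−α} ds)^{δ/2} dt < ∞`. -/
theorem stmt10 (K₁ K₂ : Set (EuclideanSpace ℝ (Fin 2)))
    (h₁ : IsClosedCone K₁) (h₂ : IsClosedCone K₂) (hK : K₁ ∩ K₂ = {0})
    (δ : ℝ) (hδ : 0 < δ) (α : ℝ) (hα : 2 * (1 + 2 / δ) < α) :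
    ∫⁻ t in K₁, (∫⁻ s in K₂, ENNReal.ofReal ((1 + ‖t - s‖) ^ (-α))) ^ (δ / 2) < ⊤ := by
  obtain ⟨c, hc0, hc1, hcsep⟩ := cone_sep K₁ K₂ h₁ h₂ hK
  -- exponents
  have hα' : 2 + 4 / δ < α := by
    have : 2 * (1 + 2 / δ) = 2 + 4 / δ := by ring
    linarith [this ▸ hα]
  set ε := (α - 2 - 4 / δ) / 2 with hε
  have hεpos : 0 < ε := by
    have : 0 < α - 2 - 4 / δ := by linarith
    positivity
  set γ := 2 + ε with hγ
  set β := α - γ with hβ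
  have hβpos : 0 < β := by
    have h4δ : 0 < 4 / δ := by positivity
    simp only [hβ, hγ]
    linarith [hε ▸ le_refl ε]
  have hβval : β = 4 / δ + ε := by
    simp only [hβ, hγ, hε]; ring
  set r := β * (δ / 2) with hr
  have hrgt : 2 < r := by
    have : r = 2 + ε * δ / 2 := by
      rw [hr, hβval]; field_simp; ring
    rw [this]
    nlinarith
  have hrpos : 0 < r := by linarith
  have hγgt : (2 : ℝ) < γ := by simp only [hγ]; linarith
  -- the finite constant C
  set C := ∫⁻ s : EuclideanSpace ℝ (Fin 2), ENNReal.ofReal ((1 + ‖s‖) ^ (-γ)) with hC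
  have hCfin : C < ⊤ := by
    apply finite_integral_one_add_norm
    rw [finrank_euclideanSpace_fin]
    exact_mod_cast hγgt
  have hCpow : C ^ (δ / 2) < ⊤ :=
    ENNReal.rpow_lt_top_of_nonneg (by positivity) hCfin.ne
  have hK₁meas : MeasurableSet K₁ := h₁.1.measurableSet
  have hK₂meas : MeasurableSet K₂ := h₂.1.measurableSet
  -- inner integral bound
  have hinner : ∀ t ∈ K₁,
      (∫⁻ s in K₂, ENNReal.ofReal ((1 + ‖t - s‖) ^ (-α)))
        ≤ ENNReal.ofReal ((1 + c * ‖t‖) ^ (-β)) * C := by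
    intro t ht
    have step1 : (∫⁻ s in K₂, ENNReal.ofReal ((1 + ‖t - s‖) ^ (-α)))
        ≤ ∫⁻ s in K₂,
            ENNReal.ofReal ((1 + c * ‖t‖) ^ (-β)) * ENNReal.ofReal ((1 + ‖t - s‖) ^ (-γ)) := by
      apply setLIntegral_mono' hK₂meas
      intro s hs
      have hpos : (0 : ℝ) < 1 + ‖t - s‖ := by positivity
      have hpos' : (0 : ℝ) < 1 + c * ‖t‖ := by positivity
      have hle : 1 + c * ‖t‖ ≤ 1 + ‖t - s‖ := by
        linarith [hcsep t ht s hs]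
      have hsplit : (1 + ‖t - s‖) ^ (-α) = (1 + ‖t - s‖) ^ (-β) * (1 + ‖t - s‖) ^ (-γ) := by
        rw [← Real.rpow_add hpos]
        congr 1
        simp only [hβ]; ring
      rw [hsplit, ← ENNReal.ofReal_mul (by positivity)]
      apply ENNReal.ofReal_le_ofReal
      apply mul_le_mul_of_nonneg_right _ (by positivity)
      exact Real.rpow_le_rpow_of_nonpos hpos' hle (by linarith)
    have step2 : (∫⁻ s in K₂,
          ENNReal.ofReal ((1 + c * ‖t‖) ^ (-β)) * ENNReal.ofReal ((1 + ‖t - s‖) ^ (-γ)))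
        = ENNReal.ofReal ((1 + c * ‖t‖) ^ (-β))
            * ∫⁻ s in K₂, ENNReal.ofReal ((1 + ‖t - s‖) ^ (-γ)) :=
      lintegral_const_mul' _ _ ENNReal.ofReal_ne_top
    have step3 : (∫⁻ s in K₂, ENNReal.ofReal ((1 + ‖t - s‖) ^ (-γ))) ≤ C := by
      refine le_trans (setLIntegral_le_lintegral _ _) ?_
      have hmp : MeasurePreserving (fun s : EuclideanSpace ℝ (Fin 2) => t - s)
          volume volume := Measure.measurePreserving_sub_left volume t
      have hmeas : Measurable fun s : EuclideanSpace ℝ (Fin 2) =>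
          ENNReal.ofReal ((1 + ‖s‖) ^ (-γ)) := by fun_prop
      rw [hC, ← hmp.lintegral_comp hmeas]
    calc (∫⁻ s in K₂, ENNReal.ofReal ((1 + ‖t - s‖) ^ (-α)))
        ≤ _ := step1
      _ = _ := step2
      _ ≤ ENNReal.ofReal ((1 + c * ‖t‖) ^ (-β)) * C :=
          mul_le_mul_right step3 _
  -- outer integral bound
  have houter : (∫⁻ t in K₁, (∫⁻ s in K₂, ENNReal.ofReal ((1 + ‖t - s‖) ^ (-α))) ^ (δ / 2))
      ≤ ∫⁻ t in K₁,
          ENNReal.ofReal (c ^ (-r) * (1 + ‖t‖) ^ (-r)) * C ^ (δ / 2) := by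
    apply setLIntegral_mono' hK₁meas
    intro t ht
    have h1 : (∫⁻ s in K₂, ENNReal.ofReal ((1 + ‖t - s‖) ^ (-α))) ^ (δ / 2)
        ≤ (ENNReal.ofReal ((1 + c * ‖t‖) ^ (-β)) * C) ^ (δ / 2) :=
      ENNReal.rpow_le_rpow (hinner t ht) (by positivity)
    refine h1.trans ?_
    rw [ENNReal.mul_rpow_of_nonneg _ _ (by positivity : (0:ℝ) ≤ δ / 2)]
    apply mul_le_mul_left
    have hpos' : (0 : ℝ) < 1 + c * ‖t‖ := by positivity
    rw [ENNReal.ofReal_rpow_of_pos (by positivity)]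
    apply ENNReal.ofReal_le_ofReal
    have heq : ((1 + c * ‖t‖) ^ (-β)) ^ (δ / 2) = (1 + c * ‖t‖) ^ (-r) := by
      rw [← Real.rpow_mul hpos'.le]
      congr 1
      rw [hr]; ring
    rw [heq]
    have hle : c * (1 + ‖t‖) ≤ 1 + c * ‖t‖ := by nlinarith [norm_nonneg t]
    have hcpos : (0 : ℝ) < c * (1 + ‖t‖) := by positivity
    calc (1 + c * ‖t‖) ^ (-r) ≤ (c * (1 + ‖t‖)) ^ (-r) :=
          Real.rpow_le_rpow_of_nonpos hcpos hle (by linarith)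
      _ = c ^ (-r) * (1 + ‖t‖) ^ (-r) :=
          Real.mul_rpow hc0.le (by positivity)
  refine lt_of_le_of_lt houter ?_
  have hrw : (∫⁻ t in K₁, ENNReal.ofReal (c ^ (-r) * (1 + ‖t‖) ^ (-r)) * C ^ (δ / 2))
      ≤ ENNReal.ofReal (c ^ (-r)) * C ^ (δ / 2)
          * ∫⁻ t : EuclideanSpace ℝ (Fin 2), ENNReal.ofReal ((1 + ‖t‖) ^ (-r)) := by
    calc (∫⁻ t in K₁, ENNReal.ofReal (c ^ (-r) * (1 + ‖t‖) ^ (-r)) * C ^ (δ / 2))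
        ≤ ∫⁻ t : EuclideanSpace ℝ (Fin 2),
            ENNReal.ofReal (c ^ (-r) * (1 + ‖t‖) ^ (-r)) * C ^ (δ / 2) :=
          setLIntegral_le_lintegral _ _
      _ = ENNReal.ofReal (c ^ (-r)) * C ^ (δ / 2)
          * ∫⁻ t : EuclideanSpace ℝ (Fin 2), ENNReal.ofReal ((1 + ‖t‖) ^ (-r)) := by
          rw [← lintegral_const_mul' _ _ (by
            exact ENNReal.mul_ne_top ENNReal.ofReal_ne_top hCpow.ne)]
          congr 1
          ext t
          rw [ENNReal.ofReal_mul (by positivity)]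
          ring
  refine lt_of_le_of_lt hrw ?_
  apply ENNReal.mul_lt_top
  · exact ENNReal.mul_lt_top ENNReal.ofReal_lt_top hCpow
  · apply finite_integral_one_add_norm
    rw [finrank_euclideanSpace_fin]
    exact_mod_cast hrgt
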